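/- Let X and Y be two real random variables defined on a common probability space such that X e^X is integrable, Y e^X is integrable, and E[X e^X] ≤ E[Y e^X] < +∞. Then E[e^X] ≤ E[e^Y]. Moreover, if the inequality E[X e^X] < E[Y e^X] is strict, then E[e^X] < E[e^Y]. -/

import Mathlib

open MeasureTheory

lemma exp_le_aux (x : ℝ) : Real.exp x ≤ Real.exp 1 + |x * Real.exp x| := by
  rcases le_or_gt x 1 with hx | hx
  · have := Real.exp_le_exp.mpr hx
    have := abs_nonneg (x * Real.exp x)
    linarith
  · have h1 : Real.exp x ≤ x * Real.exp x := by
      nlinarith [Real.exp_pos x]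
    have h2 : x * Real.exp x ≤ |x * Real.exp x| := le_abs_self _
    have := Real.exp_pos 1
    linarith

lemma tangent_aux (x y : ℝ) : (1 + (y - x)) * Real.exp x ≤ Real.exp y := by
  have h := Real.add_one_le_exp (y - x)
  have hx := Real.exp_pos x
  have : (1 + (y - x)) * Real.exp x ≤ Real.exp (y - x) * Real.exp x := by
    nlinarith
  calc (1 + (y - x)) * Real.exp x ≤ Real.exp (y - x) * Real.exp x := this
    _ = Real.exp y := by rw [← Real.exp_add]; ring_nf

/-- **Decoupling inequality for exponential moments** (Lemma `theorem duality entropy`).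
If `E[X e^X] ≤ E[Y e^X] < ∞` then `E[e^X] ≤ E[e^Y]` (where `E[e^Y]` may be infinite,
hence the use of the Lebesgue integral of `ENNReal.ofReal (exp ∘ Y)`); moreover the
conclusion is strict if the hypothesis is strict. -/
theorem decoupling_inequality
    {Ω : Type*} [MeasurableSpace Ω] (μ : Measure Ω) [IsProbabilityMeasure μ]
    (X Y : Ω → ℝ) (hXmeas : Measurable X) (hYmeas : Measurable Y)
    (hXint : Integrable (fun ω => X ω * Real.exp (X ω)) μ)
    (hYint : Integrable (fun ω => Y ω * Real.exp (X ω)) μ)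
    (h : ∫ ω, X ω * Real.exp (X ω) ∂μ ≤ ∫ ω, Y ω * Real.exp (X ω) ∂μ) :
    (∫⁻ ω, ENNReal.ofReal (Real.exp (X ω)) ∂μ ≤ ∫⁻ ω, ENNReal.ofReal (Real.exp (Y ω)) ∂μ) ∧
      ((∫ ω, X ω * Real.exp (X ω) ∂μ < ∫ ω, Y ω * Real.exp (X ω) ∂μ) →
        ∫⁻ ω, ENNReal.ofReal (Real.exp (X ω)) ∂μ < ∫⁻ ω, ENNReal.ofReal (Real.exp (Y ω)) ∂μ) := by
  -- e^X is integrable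
  have heXmeas : Measurable fun ω => Real.exp (X ω) := hXmeas.exp
  have heYmeas : Measurable fun ω => Real.exp (Y ω) := hYmeas.exp
  have heX : Integrable (fun ω => Real.exp (X ω)) μ := by
    have hbound : Integrable (fun ω => Real.exp 1 + |X ω * Real.exp (X ω)|) μ :=
      (integrable_const _).add hXint.abs
    refine hbound.mono heXmeas.aestronglyMeasurable (Filter.Eventually.of_forall fun ω => ?_)
    rw [Real.norm_eq_abs, abs_of_pos (Real.exp_pos _)]
    have h1 := exp_le_aux (X ω)
    have h2 : (0:ℝ) ≤ Real.exp 1 + |X ω * Real.exp (X ω)| :=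
      le_trans (Real.exp_pos _).le h1
    rw [Real.norm_eq_abs, abs_of_nonneg h2]
    exact h1
  have hlX : ∫⁻ ω, ENNReal.ofReal (Real.exp (X ω)) ∂μ
      = ENNReal.ofReal (∫ ω, Real.exp (X ω) ∂μ) :=
    (ofReal_integral_eq_lintegral_ofReal heX
      (Filter.Eventually.of_forall fun ω => (Real.exp_pos _).le)).symm
  have hlXlt : ∫⁻ ω, ENNReal.ofReal (Real.exp (X ω)) ∂μ < ⊤ := by
    rw [hlX]; exact ENNReal.ofReal_lt_top
  rcases eq_or_ne (∫⁻ ω, ENNReal.ofReal (Real.exp (Y ω)) ∂μ) ⊤ with htop | hfin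
  · rw [htop]
    exact ⟨le_top, fun _ => hlXlt.trans_le le_top⟩
  · -- e^Y is integrable
    have heY : Integrable (fun ω => Real.exp (Y ω)) μ := by
      refine ⟨heYmeas.aestronglyMeasurable, ?_⟩
      rw [HasFiniteIntegral]
      calc ∫⁻ ω, ‖Real.exp (Y ω)‖₊ ∂μ
          = ∫⁻ ω, ENNReal.ofReal (Real.exp (Y ω)) ∂μ := by
            apply lintegral_congr fun ω => ?_
            rw [← enorm_eq_nnnorm, ← ofReal_norm, Real.norm_eq_abs,
              abs_of_pos (Real.exp_pos _)]
        _ < ⊤ := lt_top_iff_ne_top.mpr hfin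
    have hlY : ∫⁻ ω, ENNReal.ofReal (Real.exp (Y ω)) ∂μ
        = ENNReal.ofReal (∫ ω, Real.exp (Y ω) ∂μ) :=
      (ofReal_integral_eq_lintegral_ofReal heY
        (Filter.Eventually.of_forall fun ω => (Real.exp_pos _).le)).symm
    -- key: ∫ e^Y ≥ ∫ e^X + (∫ Y e^X - ∫ X e^X)
    have hint2 : Integrable (fun ω => (1 + (Y ω - X ω)) * Real.exp (X ω)) μ := by
      have : (fun ω => (1 + (Y ω - X ω)) * Real.exp (X ω))
          = fun ω => Real.exp (X ω) + (Y ω * Real.exp (X ω) - X ω * Real.exp (X ω)) := by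
        funext ω; ring
      rw [this]
      exact heX.add (hYint.sub hXint)
    have hmono : ∫ ω, (1 + (Y ω - X ω)) * Real.exp (X ω) ∂μ ≤ ∫ ω, Real.exp (Y ω) ∂μ :=
      integral_mono hint2 heY fun ω => tangent_aux (X ω) (Y ω)
    have hsplit : ∫ ω, (1 + (Y ω - X ω)) * Real.exp (X ω) ∂μ
        = ∫ ω, Real.exp (X ω) ∂μ
          + (∫ ω, Y ω * Real.exp (X ω) ∂μ - ∫ ω, X ω * Real.exp (X ω) ∂μ) := by
      have hsub : Integrable (fun ω => Y ω * Real.exp (X ω) - X ω * Real.exp (X ω)) μ :=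
        hYint.sub hXint
      rw [show (fun ω => (1 + (Y ω - X ω)) * Real.exp (X ω))
          = fun ω => Real.exp (X ω) + (Y ω * Real.exp (X ω) - X ω * Real.exp (X ω))
          from funext fun ω => by ring,
        integral_add heX hsub, integral_sub hYint hXint]
    have hkey : ∫ ω, Real.exp (X ω) ∂μ
        + (∫ ω, Y ω * Real.exp (X ω) ∂μ - ∫ ω, X ω * Real.exp (X ω) ∂μ)
        ≤ ∫ ω, Real.exp (Y ω) ∂μ := hsplit ▸ hmono
    constructor
    · rw [hlX, hlY]
      exact ENNReal.ofReal_le_ofReal (by linarith)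
    · intro hs
      rw [hlX, hlY]
      have hXnn : 0 ≤ ∫ ω, Real.exp (X ω) ∂μ :=
        integral_nonneg fun ω => (Real.exp_pos _).le
      exact (ENNReal.ofReal_lt_ofReal_iff (by linarith)).mpr (by linarith)
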